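/- Let r ≥ 1 and let n_1, …, n_r be positive integers, and let N ≥ 2 be divisible by each n_i with N/n_i ≥ 2 for all i. Let S be the set of tuples f = (f_1, …, f_r) where f_i : Fin N → Fin n_i and every fiber of each f_i has exactly N/n_i elements. Fix a label v and set α(f) = #{ j : f_i(j) = v_i for all i }. Then, as an identity of rational numbers, (1/|S|) · ∑_{f ∈ S} C(α(f), 2) = C(N, 2) · ∏_{i=1}^r (N − n_i) / ( n_i² · (N − 1) ), where C(m,2) = m(m−1)/2 denotes the binomial coefficient. -/

import Mathlib

open Finset


namespace FirstWayAux

variable {N n : ℕ}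

/-- Balanced functions: every fiber has `m` elements. -/
def Bal (N n m : ℕ) : Finset (Fin N → Fin n) :=
  Finset.univ.filter fun f => ∀ a, (Finset.univ.filter fun k => f k = a).card = m

lemma mem_Bal {m : ℕ} {f : Fin N → Fin n} :
    f ∈ Bal N n m ↔ ∀ a, (Finset.univ.filter fun k => f k = a).card = m := by
  simp [Bal]

lemma Bal_nonempty {m : ℕ} (hm : 0 < m) (hNm : N = n * m) :
    (Bal N n m).Nonempty := by
  have hdiv : ∀ j : Fin N, j.val / m < n := by
    intro j
    rw [Nat.div_lt_iff_lt_mul hm]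
    have := j.isLt
    omega
  refine ⟨fun j => ⟨j.val / m, hdiv j⟩, ?_⟩
  rw [mem_Bal]
  intro a
  have key : ∀ x : Fin m, a.val * m + x.val < N := by
    intro x
    have := a.isLt
    have := x.isLt
    calc a.val * m + x.val < (a.val + 1) * m := by ring_nf; omega
    _ ≤ n * m := Nat.mul_le_mul_right m (by omega)
    _ = N := hNm.symm
  have := (Finset.card_bij
    (fun (x : Fin m) (_ : x ∈ Finset.univ) => (⟨a.val * m + x.val, key x⟩ : Fin N))
    ?_ ?_ ?_ :
    (Finset.univ : Finset (Fin m)).card =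
      (Finset.univ.filter fun k : Fin N => (⟨k.val / m, hdiv k⟩ : Fin n) = a).card)
  · rw [← this]; simp
  · intro x _
    simp only [Finset.mem_filter, Finset.mem_univ, true_and]
    apply Fin.ext
    simp only
    rw [Nat.add_comm, Nat.mul_comm a.val m, Nat.add_mul_div_left _ _ hm,
      Nat.div_eq_of_lt x.isLt, Nat.zero_add]
  · intro x _ y _ h
    have := congrArg Fin.val h
    simp only at this
    exact Fin.ext (by omega)
  · intro j hj
    simp only [Finset.mem_filter, Finset.mem_univ, true_and] at hj
    have hj' : j.val / m = a.val := congrArg Fin.val hj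
    have h1 := Nat.div_add_mod j.val m
    have h2 := Nat.mod_lt j.val hm
    refine ⟨⟨j.val % m, h2⟩, Finset.mem_univ _, ?_⟩
    apply Fin.ext
    show a.val * m + j.val % m = j.val
    rw [← hj', Nat.mul_comm]
    exact Nat.div_add_mod j.val m

lemma card_filter_perm {α : Type*} [Fintype α] [DecidableEq α] (σ : Equiv.Perm α)
    (p : α → Prop) [DecidablePred p] :
    (Finset.univ.filter fun x => p (σ x)).card = (Finset.univ.filter p).card := by
  apply Finset.card_bij (fun x _ => σ x)
  · intro a ha; simp at ha ⊢; exact ha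
  · intro a _ b _ h; exact σ.injective h
  · intro b hb; refine ⟨σ.symm b, ?_, by simp⟩; simp at hb ⊢; simpa using hb

lemma comp_mem_Bal {m : ℕ} {f : Fin N → Fin n} (σ : Equiv.Perm (Fin N))
    (hf : f ∈ Bal N n m) : f ∘ σ ∈ Bal N n m := by
  rw [mem_Bal] at hf ⊢
  intro a
  rw [show (Finset.univ.filter fun k => (f ∘ σ) k = a) =
      (Finset.univ.filter fun k => f (σ k) = a) from rfl,
    card_filter_perm σ (fun k => f k = a)]
  exact hf a

lemma card_cond_comp (m : ℕ) (σ : Equiv.Perm (Fin N)) (v : Fin n) (j k : Fin N) :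
    ((Bal N n m).filter fun f => f j = v ∧ f k = v).card =
    ((Bal N n m).filter fun f => f (σ j) = v ∧ f (σ k) = v).card := by
  apply Finset.card_bij (fun f _ => f ∘ σ.symm)
  · intro f hf
    simp only [Finset.mem_filter] at hf ⊢
    exact ⟨comp_mem_Bal σ.symm hf.1, by simpa using hf.2⟩
  · intro f _ g _ h
    funext x
    have := congrFun h (σ x)
    simpa using this
  · intro g hg
    simp only [Finset.mem_filter] at hg
    refine ⟨g ∘ σ, ?_, ?_⟩
    · simp only [Finset.mem_filter, Function.comp]
      exact ⟨comp_mem_Bal σ hg.1, hg.2⟩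
    · funext x; simp

lemma two_trans {j k j' k' : Fin N} (hjk : j ≠ k) (hjk' : j' ≠ k') :
    ∃ σ : Equiv.Perm (Fin N), σ j' = j ∧ σ k' = k := by
  classical
  set τ := Equiv.swap j' j with hτ
  have hτj : τ j' = j := Equiv.swap_apply_left _ _
  have h1 : τ k' ≠ j := by
    intro h; rw [← hτj] at h; exact hjk' (τ.injective h.symm).symm.symm
  refine ⟨τ.trans (Equiv.swap (τ k') k), ?_, ?_⟩
  · simp only [Equiv.trans_apply, hτj]
    exact Equiv.swap_apply_of_ne_of_ne (Ne.symm h1) hjk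
  · simp only [Equiv.trans_apply]
    exact Equiv.swap_apply_left _ _

/-- The pair-count is independent of the pair. -/
lemma card_cond_const (m : ℕ) (v : Fin n) {j k j' k' : Fin N}
    (hjk : j ≠ k) (hjk' : j' ≠ k') :
    ((Bal N n m).filter fun f => f j' = v ∧ f k' = v).card =
    ((Bal N n m).filter fun f => f j = v ∧ f k = v).card := by
  obtain ⟨σ, hσ1, hσ2⟩ := two_trans hjk hjk'
  rw [card_cond_comp m σ v j' k', hσ1, hσ2]

lemma offDiag_filter_eq (v : Fin n) (f : Fin N → Fin n) :
    ((Finset.univ.offDiag).filter fun p : Fin N × Fin N => f p.1 = v ∧ f p.2 = v)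
      = (Finset.univ.filter fun k => f k = v).offDiag := by
  ext p
  simp [Finset.mem_offDiag, and_comm, and_assoc, and_left_comm]

/-- One-coordinate counting identity. -/
lemma one_coord (m : ℕ) (v : Fin n) {j k : Fin N} (hjk : j ≠ k) :
    ((Bal N n m).filter fun f => f j = v ∧ f k = v).card * (N * N - N) =
      (Bal N n m).card * (m * m - m) := by
  have swap_eq :
      ∑ f ∈ Bal N n m, ((Finset.univ.offDiag).filter
          fun p : Fin N × Fin N => f p.1 = v ∧ f p.2 = v).card
        = ∑ p ∈ (Finset.univ.offDiag : Finset (Fin N × Fin N)),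
            ((Bal N n m).filter fun f => f p.1 = v ∧ f p.2 = v).card := by
    simp only [Finset.card_filter]
    rw [Finset.sum_comm]
  have lhs_eq : ∑ f ∈ Bal N n m, ((Finset.univ.offDiag).filter
      fun p : Fin N × Fin N => f p.1 = v ∧ f p.2 = v).card
      = (Bal N n m).card * (m * m - m) := by
    rw [Finset.sum_congr rfl fun f hf => ?_, Finset.sum_const, smul_eq_mul]
    rw [offDiag_filter_eq, Finset.offDiag_card, (mem_Bal.mp hf) v]
  have rhs_eq : ∑ p ∈ (Finset.univ.offDiag : Finset (Fin N × Fin N)),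
      ((Bal N n m).filter fun f => f p.1 = v ∧ f p.2 = v).card
      = (N * N - N) * ((Bal N n m).filter fun f => f j = v ∧ f k = v).card := by
    have h : ∀ p ∈ (Finset.univ.offDiag : Finset (Fin N × Fin N)),
        ((Bal N n m).filter fun f => f p.1 = v ∧ f p.2 = v).card
        = ((Bal N n m).filter fun f => f j = v ∧ f k = v).card := fun p hp =>
      card_cond_const m v hjk (Finset.mem_offDiag.mp hp).2.2
    rw [Finset.sum_congr rfl h, Finset.sum_const, smul_eq_mul, Finset.offDiag_card]
    simp [Finset.card_univ]
  rw [Nat.mul_comm]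
  rw [← rhs_eq, ← swap_eq, lhs_eq]

end FirstWayAux
namespace FirstWayAux2

lemma two_mul_choose_two (a : ℕ) : 2 * a.choose 2 = a * a - a := by
  cases a with
  | zero => simp
  | succ b =>
    rw [Nat.choose_two_right, Nat.mul_div_cancel']
    · have h : (b+1)*(b+1) = (b+1)*((b+1)-1) + (b+1) := by simp; ring
      omega
    · simp only [Nat.succ_sub_one]
      have := (Nat.even_mul_succ_self b).two_dvd
      rwa [Nat.mul_comm] at this

lemma offDiag_filter_eq' {α : Type*} [Fintype α] [DecidableEq α]
    (q : α → Prop) [DecidablePred q] :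
    ((Finset.univ.offDiag).filter fun p : α × α => q p.1 ∧ q p.2)
      = (Finset.univ.filter q).offDiag := by
  ext p
  simp [Finset.mem_offDiag, and_comm, and_assoc, and_left_comm]

end FirstWayAux2

open FirstWayAux FirstWayAux2

/-- **First Way**, the quantity `W(α) = (1/|S|) ∑_{f∈S} C(α(f),2)` equals
`C(N,2) ∏_{i=1}^r (N - n_i) / (n_i² (N-1))`, as rational numbers. -/
theorem firstWay_W (r : ℕ) (hr : 1 ≤ r) (n : ℕ → ℕ)
    (hn : ∀ i ∈ Finset.Icc 1 r, 0 < n i)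
    (N : ℕ) (hN : 2 ≤ N) (hdvd : ∀ i ∈ Finset.Icc 1 r, n i ∣ N)
    (hsize : ∀ i ∈ Finset.Icc 1 r, 2 ≤ N / n i)
    (v : ∀ i : Fin r, Fin (n (i.val + 1))) :
    (1 : ℚ) / (Fintype.card {f : ∀ i : Fin r, Fin N → Fin (n (i.val + 1)) //
          ∀ (i : Fin r) (a : Fin (n (i.val + 1))),
            (Finset.univ.filter fun k => f i k = a).card = N / n (i.val + 1)} : ℚ) *
        (∑ f : {f : ∀ i : Fin r, Fin N → Fin (n (i.val + 1)) //
            ∀ (i : Fin r) (a : Fin (n (i.val + 1))),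
              (Finset.univ.filter fun k => f i k = a).card = N / n (i.val + 1)},
          (((Finset.univ.filter fun j : Fin N => ∀ i : Fin r, f.1 i j = v i).card).choose 2
            : ℚ)) =
      (N.choose 2 : ℚ) *
        ∏ i ∈ Finset.Icc 1 r,
          ((N : ℚ) - (n i : ℚ)) / ((n i : ℚ) ^ 2 * ((N : ℚ) - 1)) := by
  classical
  have hmem : ∀ i : Fin r, i.val + 1 ∈ Finset.Icc 1 r := fun i => by
    have := i.isLt
    simp only [Finset.mem_Icc]
    omega
  set m : Fin r → ℕ := fun i => N / n (i.val + 1) with hm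
  have hpos : ∀ i : Fin r, 0 < n (i.val + 1) := fun i => hn _ (hmem i)
  have hd : ∀ i : Fin r, n (i.val + 1) ∣ N := fun i => hdvd _ (hmem i)
  have hm2 : ∀ i : Fin r, 2 ≤ m i := fun i => hsize _ (hmem i)
  have hNm : ∀ i, N = n (i.val + 1) * m i := fun i => (Nat.mul_div_cancel' (hd i)).symm
  set B : ∀ i : Fin r, Finset (Fin N → Fin (n (i.val + 1))) :=
    fun i => Bal N (n (i.val + 1)) (m i) with hB
  set P : (∀ i : Fin r, Fin N → Fin (n (i.val + 1))) → Prop := fun f =>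
    ∀ (i : Fin r) (a : Fin (n (i.val + 1))),
      (Finset.univ.filter fun k => f i k = a).card = N / n (i.val + 1) with hP
  have hfilter : (Finset.univ.filter P) = Fintype.piFinset B := by
    ext f
    simp only [Finset.mem_filter, Finset.mem_univ, true_and, Fintype.mem_piFinset,
      hP, hB, mem_Bal, hm]
  have hcard : (Fintype.card {f // P f} : ℚ) = ∏ i, ((B i).card : ℚ) := by
    rw [Fintype.card_subtype, hfilter, Fintype.card_piFinset]
    push_cast
    rfl
  have hsum : (∑ f : {f // P f},
      (((Finset.univ.filter fun j : Fin N => ∀ i : Fin r, f.1 i j = v i).card).choose 2 : ℚ))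
      = ∑ f ∈ Fintype.piFinset B,
        (((Finset.univ.filter fun j : Fin N => ∀ i : Fin r, f i j = v i).card).choose 2 : ℚ) := by
    rw [← hfilter]
    exact (Finset.sum_subtype (Finset.univ.filter P)
      (fun x => by simp only [Finset.mem_filter, Finset.mem_univ, true_and])
      (fun g => (((Finset.univ.filter fun j : Fin N =>
        ∀ i : Fin r, g i j = v i).card).choose 2 : ℚ))).symm
  -- the two distinguished points
  have h0 : (0 : ℕ) < N := by omega
  have h1 : (1 : ℕ) < N := by omega
  set j0 : Fin N := ⟨0, h0⟩ with hj0
  set k0 : Fin N := ⟨1, h1⟩ with hk0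
  have hjk : j0 ≠ k0 := by simp [hj0, hk0, Fin.ext_iff]
  set c : Fin r → ℕ :=
    fun i => ((B i).filter fun g => g j0 = v i ∧ g k0 = v i).card with hc
  -- the main counting identity over ℕ
  have hkey : 2 * ∑ f ∈ Fintype.piFinset B,
      ((Finset.univ.filter fun j : Fin N => ∀ i : Fin r, f i j = v i).card).choose 2
      = (N * N - N) * ∏ i, c i := by
    rw [Finset.mul_sum]
    have step1 : ∀ f ∈ Fintype.piFinset B,
        2 * ((Finset.univ.filter fun j : Fin N => ∀ i : Fin r, f i j = v i).card).choose 2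
        = ((Finset.univ.offDiag).filter fun p : Fin N × Fin N =>
            (∀ i, f i p.1 = v i) ∧ (∀ i, f i p.2 = v i)).card := by
      intro f _
      rw [two_mul_choose_two, offDiag_filter_eq' (fun j => ∀ i, f i j = v i),
        Finset.offDiag_card]
    rw [Finset.sum_congr rfl step1]
    have step2 : ∑ f ∈ Fintype.piFinset B,
        ((Finset.univ.offDiag).filter fun p : Fin N × Fin N =>
            (∀ i, f i p.1 = v i) ∧ (∀ i, f i p.2 = v i)).card
        = ∑ p ∈ (Finset.univ.offDiag : Finset (Fin N × Fin N)),
            ((Fintype.piFinset B).filter fun f =>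
              (∀ i, f i p.1 = v i) ∧ (∀ i, f i p.2 = v i)).card := by
      simp only [Finset.card_filter]
      rw [Finset.sum_comm]
    rw [step2]
    have step3 : ∀ p ∈ (Finset.univ.offDiag : Finset (Fin N × Fin N)),
        ((Fintype.piFinset B).filter fun f =>
          (∀ i, f i p.1 = v i) ∧ (∀ i, f i p.2 = v i)).card = ∏ i, c i := by
      intro p hp
      have hne := (Finset.mem_offDiag.mp hp).2.2
      have heq : ((Fintype.piFinset B).filter fun f =>
            (∀ i, f i p.1 = v i) ∧ (∀ i, f i p.2 = v i))
          = Fintype.piFinset (fun i => (B i).filter fun g => g p.1 = v i ∧ g p.2 = v i) := by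
        ext f
        simp only [Finset.mem_filter, Fintype.mem_piFinset]
        constructor
        · rintro ⟨hf, h2, h3⟩ i; exact ⟨hf i, h2 i, h3 i⟩
        · intro h; exact ⟨fun i => (h i).1, fun i => (h i).2.1, fun i => (h i).2.2⟩
      rw [heq, Fintype.card_piFinset]
      exact Finset.prod_congr rfl fun i _ => card_cond_const (m i) (v i) hjk hne
    rw [Finset.sum_congr rfl step3, Finset.sum_const, smul_eq_mul, Finset.offDiag_card]
    simp [Finset.card_univ]
  -- nonzero facts
  have hNQ2 : (2 : ℚ) ≤ (N : ℚ) := by exact_mod_cast hN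
  have hN1ne : (N : ℚ) - 1 ≠ 0 := by intro h; linarith
  have hNle : N ≤ N * N := Nat.le_mul_of_pos_left _ h0
  have hNNpos : (0 : ℚ) < (N : ℚ) * N - N := by nlinarith
  have hNNne : (N : ℚ) * N - N ≠ 0 := ne_of_gt hNNpos
  -- per-coordinate ratio over ℚ
  have hq : ∀ i : Fin r, (c i : ℚ) = ((B i).card : ℚ) *
      (((N : ℚ) - (n (i.val + 1) : ℚ)) /
        ((n (i.val + 1) : ℚ) ^ 2 * ((N : ℚ) - 1))) := by
    intro i
    have hnat := one_coord (N := N) (n := n (i.val + 1)) (m i) (v i) hjk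
    have hmpos : 0 < m i := lt_of_lt_of_le Nat.zero_lt_two (hm2 i)
    have hmle : m i ≤ m i * m i := Nat.le_mul_of_pos_left _ hmpos
    have hcastid : (c i : ℚ) * ((N : ℚ) * N - N) =
        ((B i).card : ℚ) * ((m i : ℚ) * (m i) - (m i)) := by
      have := congrArg (fun t : ℕ => (t : ℚ)) hnat
      push_cast [Nat.cast_sub hNle, Nat.cast_sub hmle] at this
      exact this
    have hnn : (n (i.val + 1) : ℚ) ≠ 0 := by
      exact_mod_cast (hpos i).ne'
    have hden : (n (i.val + 1) : ℚ) ^ 2 * ((N : ℚ) - 1) ≠ 0 :=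
      mul_ne_zero (pow_ne_zero _ hnn) hN1ne
    have hcast : (N : ℚ) = (n (i.val + 1) : ℚ) * (m i : ℚ) := by
      exact_mod_cast hNm i
    have hc2 : (c i : ℚ) =
        ((B i).card : ℚ) * ((m i : ℚ) * (m i) - (m i)) / ((N : ℚ) * N - N) := by
      rw [eq_div_iff hNNne]; exact hcastid
    rw [hc2, mul_div_assoc]
    congr 1
    rw [div_eq_div_iff hNNne hden, hcast]
    ring
  -- nonvanishing of the cardinalities
  have hBne : ∀ i : Fin r, ((B i).card : ℚ) ≠ 0 := by
    intro i
    have := Bal_nonempty (N := N) (n := n (i.val + 1))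
      (m := m i) (lt_of_lt_of_le Nat.zero_lt_two (hm2 i)) (hNm i)
    exact_mod_cast (Finset.card_pos.mpr this).ne'
  have hProdne : (∏ i, ((B i).card : ℚ)) ≠ 0 :=
    Finset.prod_ne_zero_iff.mpr fun i _ => hBne i
  -- cast the key identity
  have hkeyQ : (2 : ℚ) * ∑ f ∈ Fintype.piFinset B,
      (((Finset.univ.filter fun j : Fin N => ∀ i : Fin r, f i j = v i).card).choose 2 : ℚ)
      = ((N : ℚ) * N - N) * ∏ i, (c i : ℚ) := by
    have := congrArg (fun t : ℕ => (t : ℚ)) hkey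
    push_cast [Nat.cast_sub hNle] at this
    exact this
  -- choose N 2 over ℚ
  have hchoose : (N.choose 2 : ℚ) = ((N : ℚ) * N - N) / 2 := by
    have := congrArg (fun t : ℕ => (t : ℚ)) (two_mul_choose_two N)
    push_cast [Nat.cast_sub hNle] at this
    rw [eq_div_iff (by norm_num : (2:ℚ) ≠ 0), mul_comm]
    exact this
  -- index conversion for the RHS product
  have hIcc : ∏ i ∈ Finset.Icc 1 r,
      ((N : ℚ) - (n i : ℚ)) / ((n i : ℚ) ^ 2 * ((N : ℚ) - 1))
      = ∏ i : Fin r,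
        ((N : ℚ) - (n (i.val + 1) : ℚ)) / ((n (i.val + 1) : ℚ) ^ 2 * ((N : ℚ) - 1)) := by
    rw [← Finset.Ico_add_one_right_eq_Icc, Finset.prod_Ico_eq_prod_range, Nat.add_sub_cancel]
    rw [← Fin.prod_univ_eq_prod_range
      (fun i => ((N : ℚ) - (n (1 + i) : ℚ)) / ((n (1 + i) : ℚ) ^ 2 * ((N : ℚ) - 1))) r]
    exact Finset.prod_congr rfl fun i _ => by rw [Nat.add_comm]
  -- assemble
  rw [hsum, hcard, hIcc, hchoose]
  have hprodc : ∏ i, (c i : ℚ) = (∏ i, ((B i).card : ℚ)) *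
      ∏ i : Fin r,
        ((N : ℚ) - (n (i.val + 1) : ℚ)) / ((n (i.val + 1) : ℚ) ^ 2 * ((N : ℚ) - 1)) := by
    rw [← Finset.prod_mul_distrib]
    exact Finset.prod_congr rfl fun i _ => hq i
  have hS : ∑ f ∈ Fintype.piFinset B,
      (((Finset.univ.filter fun j : Fin N => ∀ i : Fin r, f i j = v i).card).choose 2 : ℚ)
      = ((N : ℚ) * N - N) * ((∏ i, ((B i).card : ℚ)) *
        ∏ i : Fin r,
          ((N : ℚ) - (n (i.val + 1) : ℚ)) / ((n (i.val + 1) : ℚ) ^ 2 * ((N : ℚ) - 1))) / 2 := by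
    rw [eq_div_iff (by norm_num : (2:ℚ) ≠ 0), mul_comm _ (2:ℚ), hkeyQ, hprodc]
  rw [hS]
  have final : ∀ (A P Q : ℚ), P ≠ 0 → 1 / P * (A * (P * Q) / 2) = A / 2 * Q := by
    intro A P Q hP
    field_simp
  exact final _ _ _ hProdne
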